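/- arXiv:hep-th/0111192 — 4 statements merged into one kernel-verified Lean document; each statement's English description precedes it below -/
import Mathlib

section
/- The minimal subtraction projection ⟨·⟩ on formal Laurent series, defined by ⟨∑_{j≥−r} c_j ε^j⟩ = ∑_{j=−r}^{−1} c_j ε^j (projection onto the strictly negative powers), satisfies the Rota–Baxter identity of weight −1: ⟨ab⟩ + ⟨a⟩⟨b⟩ = ⟨a⟨b⟩⟩ + ⟨⟨a⟩b⟩ for all Laurent series a, b with finite-order poles. -/
/-- The minimal subtraction projection on Laurent series: keep only the terms with
strictly negative exponent (the pole part). -/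
noncomputable def msProj (a : LaurentSeries ℚ) : LaurentSeries ℚ :=
  ⟨fun n => if n < 0 then a.coeff n else 0,
   a.isPWO_support'.mono (by
     intro n hn
     simp only [Function.mem_support] at hn ⊢
     intro h
     simp [h] at hn)⟩

lemma msProj_coeff (a : LaurentSeries ℚ) (n : ℤ) :
    (msProj a).coeff n = if n < 0 then a.coeff n else 0 := rfl

lemma msProj_add (a b : LaurentSeries ℚ) : msProj (a + b) = msProj a + msProj b := by
  ext n
  simp only [msProj_coeff, HahnSeries.coeff_add]
  split <;> simp

lemma msProj_of_neg (a : LaurentSeries ℚ) (h : ∀ n ∈ a.support, n < 0) :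
    msProj a = a := by
  ext n
  simp only [msProj_coeff]
  split
  · rfl
  · rename_i hn
    by_contra hc
    exact hn (h n (by simpa [HahnSeries.mem_support] using fun h' => hc h'.symm))

lemma msProj_of_nonneg (a : LaurentSeries ℚ) (h : ∀ n ∈ a.support, 0 ≤ n) :
    msProj a = 0 := by
  ext n
  simp only [msProj_coeff, HahnSeries.coeff_zero]
  split
  · rename_i hn
    by_contra hc
    exact absurd (h n (by simpa [HahnSeries.mem_support] using hc)) (not_le.2 hn)
  · rfl

lemma msProj_support (a : LaurentSeries ℚ) : ∀ n ∈ (msProj a).support, n < 0 := by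
  intro n hn
  simp only [HahnSeries.mem_support, msProj_coeff] at hn
  by_contra hc
  simp [hc] at hn

lemma sub_msProj_support (a : LaurentSeries ℚ) :
    ∀ n ∈ (a - msProj a).support, 0 ≤ n := by
  intro n hn
  simp only [HahnSeries.mem_support, HahnSeries.coeff_sub, msProj_coeff] at hn
  by_contra hc
  simp [not_le.1 hc] at hn

lemma mul_support_neg (x y : LaurentSeries ℚ) (hx : ∀ n ∈ x.support, n < 0)
    (hy : ∀ n ∈ y.support, n < 0) : ∀ n ∈ (x * y).support, n < 0 := by
  intro n hn
  obtain ⟨i, hi, j, hj, rfl⟩ := Set.mem_add.1 (HahnSeries.support_mul_subset hn)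
  have := hx i hi
  have := hy j hj
  omega

lemma mul_support_nonneg (x y : LaurentSeries ℚ) (hx : ∀ n ∈ x.support, 0 ≤ n)
    (hy : ∀ n ∈ y.support, 0 ≤ n) : ∀ n ∈ (x * y).support, 0 ≤ n := by
  intro n hn
  obtain ⟨i, hi, j, hj, rfl⟩ := Set.mem_add.1 (HahnSeries.support_mul_subset hn)
  have := hx i hi
  have := hy j hj
  omega

/-- The minimal subtraction projection satisfies the Rota–Baxter identity of weight `−1`:
`⟨ab⟩ + ⟨a⟩⟨b⟩ = ⟨a⟨b⟩⟩ + ⟨⟨a⟩b⟩`. -/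
theorem msProj_rotaBaxter (a b : LaurentSeries ℚ) :
    msProj (a * b) + msProj a * msProj b =
      msProj (a * msProj b) + msProj (msProj a * b) := by
  set p := msProj a with hp
  set r := msProj b with hr
  set q := a - p with hq
  set s := b - r with hs
  have ha : a = p + q := by rw [hq]; ring
  have hb : b = r + s := by rw [hs]; ring
  have hpr : msProj (p * r) = p * r :=
    msProj_of_neg _ (mul_support_neg _ _ (msProj_support a) (msProj_support b))
  have hqs : msProj (q * s) = 0 :=
    msProj_of_nonneg _ (mul_support_nonneg _ _ (sub_msProj_support a) (sub_msProj_support b))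
  calc msProj (a * b) + p * r
      = msProj (p * r + p * s + q * r + q * s) + p * r := by rw [ha, hb]; ring_nf
    _ = msProj (p * r) + msProj (p * s) + msProj (q * r) + msProj (q * s) + p * r := by
        rw [msProj_add, msProj_add, msProj_add]
    _ = (msProj (p * r) + msProj (q * r)) + (msProj (p * r) + msProj (p * s)) := by
        rw [hpr, hqs]; ring
    _ = msProj (p * r + q * r) + msProj (p * r + p * s) := by rw [msProj_add, msProj_add]
    _ = msProj (a * r) + msProj (p * b) := by rw [ha, hb]; ring_nf
end

section
/- Let φ, ψ be two algebra homomorphisms from a Hopf algebra H into a commutative ring V of Laurent series, and suppose Γ ∈ H satisfies Δ(Γ) = Γ⊗1 + 1⊗Γ + ∑_γ γ ⊗ Γ/γ with all γ, Γ/γ in the augmentation ideal. If φ(Γ) − ψ(Γ) has no pole (is holomorphic at ε = 0) and φ(γ) = ψ(γ) for all the subterms γ and Γ/γ appearing in the reduced coproduct, then the MS counterterms agree: S_R^φ(Γ) = S_R^ψ(Γ), where S_R^φ(Γ) = −R[φ(Γ) + ∑_γ S_R^φ(γ)φ(Γ/γ)] and R is the projection onto the pole part. -/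

lemma msProj_neg (a : LaurentSeries ℚ) : msProj (-a) = -msProj a := by
  ext n
  simp only [msProj, HahnSeries.coeff_neg]
  by_cases h : n < 0 <;> simp [HahnSeries.coeff, h]

lemma msProj_sub (a b : LaurentSeries ℚ) : msProj (a - b) = msProj a - msProj b := by
  ext n
  simp only [msProj, HahnSeries.coeff_sub]
  by_cases h : n < 0 <;> simp [HahnSeries.coeff, h]

/-- Let `φ, ψ` be characters of a Hopf algebra `H` into Laurent series, and let
`Γ ∈ H` have reduced coproduct `∑ᵢ γᵢ ⊗ Γ/γᵢ` (indexed by a finite type `ι`), with the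
MS counterterms `SRφ`, `SRψ` obeying the recursion
`S_R^φ(Γ) = −R[φ(Γ) + ∑ᵢ S_R^φ(γᵢ)·φ(Γ/γᵢ)]`.  If `φ(Γ) − ψ(Γ)` has no pole part and
`φ`, `ψ` (and recursively their counterterms) agree on all the subterms `γᵢ`, `Γ/γᵢ`,
then the counterterms agree: `S_R^φ(Γ) = S_R^ψ(Γ)`. -/
theorem counterterms_agree {H : Type} [CommRing H] {ι : Type} [Fintype ι]
    (φ ψ : H →+* LaurentSeries ℚ) (counit : H →+* ℚ)
    (Γ : H) (γ quot : ι → H)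
    (haug : ∀ i, counit (γ i) = 0 ∧ counit (quot i) = 0)
    (SRφ SRψ : H → LaurentSeries ℚ)
    (hrecφ : SRφ Γ = -msProj (φ Γ + ∑ i : ι, SRφ (γ i) * φ (quot i)))
    (hrecψ : SRψ Γ = -msProj (ψ Γ + ∑ i : ι, SRψ (γ i) * ψ (quot i)))
    (hnopole : msProj (φ Γ - ψ Γ) = 0)
    (hsub : ∀ i : ι, φ (γ i) = ψ (γ i) ∧ φ (quot i) = ψ (quot i))
    (hsubS : ∀ i : ι, SRφ (γ i) = SRψ (γ i)) :
    SRφ Γ = SRψ Γ := by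
  have hsum : (∑ i : ι, SRφ (γ i) * φ (quot i)) = ∑ i : ι, SRψ (γ i) * ψ (quot i) := by
    refine Finset.sum_congr rfl fun i _ => ?_
    rw [hsubS i, (hsub i).2]
  have key : SRφ Γ - SRψ Γ = -msProj (φ Γ - ψ Γ) := by
    rw [hrecφ, hrecψ, hsum, neg_sub_neg, ← msProj_sub,
      show (ψ Γ + ∑ i : ι, SRψ (γ i) * ψ (quot i)) - (φ Γ + ∑ i : ι, SRψ (γ i) * ψ (quot i))
        = -(φ Γ - ψ Γ) by ring, msProj_neg]
  rw [hnopole, neg_zero] at key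
  exact sub_eq_zero.mp key
end

section
/- In the Connes–Kreimer Hopf algebra of rooted trees, the counterterm map S_R^φ defined by the recursion S_R^φ(T) = −R[φ(T) + ∑_{c admissible} S_R^φ(P^c(T))·φ(R^c(T))] (sum over admissible cuts c of T), with φ a character into a commutative Rota–Baxter algebra (V,R), satisfies: S_R^φ(T) ∈ im(R) for every tree T, and the convolution (S_R^φ ⋆ φ)(T) = S_R^φ(T) + φ(T) + ∑_c S_R^φ(P^c(T))φ(R^c(T)) lies in ker(R) whenever R is the minimal subtraction projection on Laurent series. -/
lemma msProj_idem (a : LaurentSeries ℚ) : msProj (msProj a) = msProj a := by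
  ext n; simp [msProj_coeff]; intro h1 h2; exact absurd h2 (not_lt.mpr h1)

/-- In the Connes–Kreimer Hopf algebra of rooted trees, with coproduct
`Δ(T) = T⊗1 + 1⊗T + ∑_c P^c(T) ⊗ R^c(T)` over admissible cuts `c` (here modelled
abstractly: `cuts T` is the finite set of pairs `(P^c(T), R^c(T))`, with `P^c(T)` a
forest, i.e. a multiset of trees), let `φ` be a character into the Rota–Baxter algebra
of Laurent series with minimal-subtraction projection `R = msProj`, extended
multiplicatively to forests, and let `S` satisfy the counterterm recursion
`S(T) = −R[φ(T) + ∑_c S(P^c(T))·φ(R^c(T))]`.  Then `S(T) ∈ im(R)` for every tree `T`,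
and the convolution `(S ⋆ φ)(T) = S(T) + φ(T) + ∑_c S(P^c(T))·φ(R^c(T))` lies in
`ker(R)`. -/
theorem counterterm_in_range_and_renormalized_in_ker
    {Tree : Type} (cuts : Tree → Finset (Multiset Tree × Tree))
    (φ : Tree → LaurentSeries ℚ) (S : Tree → LaurentSeries ℚ)
    (hrec : ∀ T : Tree,
      S T = -msProj (φ T + ∑ c ∈ cuts T, ((c.1.map S).prod) * φ c.2)) :
    (∀ T : Tree, S T ∈ Set.range msProj) ∧
      (∀ T : Tree,
        msProj (S T + φ T + ∑ c ∈ cuts T, ((c.1.map S).prod) * φ c.2) = 0) := by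
  constructor
  · intro T
    rw [hrec T, ← msProj_neg]
    exact ⟨_, rfl⟩
  · intro T
    rw [add_assoc, msProj_add, hrec T, msProj_neg, msProj_idem]
    ring
end

section
/- The product of the Laurent expansions of the two one-loop vertex functions in Yukawa theory, Γ¹_{0,0} = F(1,1) and Γ²_{0,0} = (1/2)[F(2,0) − F(2,1) + F(1,1)], have the same residue (coefficient of 1/ε) at ε = 0, namely both equal 1: Res_{ε=0} F(1,1) = 1 and Res_{ε=0} (1/2)[F(2,0) − F(2,1) + F(1,1)] = 1. -/
open Filter
open scoped Topology

/-- `F(a,b)` interpreted via the reciprocal Gamma function, so that `F(2,0) = 0`. -/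
noncomputable def F (ε a b : ℂ) : ℂ :=
  Complex.Gamma (2 - a - ε) * Complex.Gamma (2 - b - ε) * Complex.Gamma (a + b - 2 + ε) *
    (Complex.Gamma a)⁻¹ * (Complex.Gamma b)⁻¹ * (Complex.Gamma (4 - a - b - 2 * ε))⁻¹

lemma gamma_ca (c : ℂ) (hc : ∀ m : ℕ, c ≠ -m) :
    ContinuousAt Complex.Gamma c := (Complex.differentiableAt_Gamma c hc).continuousAt

lemma ne_neg_nat_one : ∀ m : ℕ, (1 : ℂ) ≠ -m := by
  intro m h
  have h2 := congrArg Complex.re h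
  simp at h2
  have : (0:ℝ) ≤ (m : ℝ) := Nat.cast_nonneg m
  linarith

lemma ne_neg_nat_two : ∀ m : ℕ, (2 : ℂ) ≠ -m := by
  intro m h
  have h2 := congrArg Complex.re h
  simp at h2
  have : (0:ℝ) ≤ (m : ℝ) := Nat.cast_nonneg m
  linarith

lemma Gamma_two' : Complex.Gamma 2 = 1 := by
  rw [show (2:ℂ) = 1 + 1 by norm_num, Complex.Gamma_add_one 1 one_ne_zero,
    Complex.Gamma_one, mul_one]

lemma ca1 : ContinuousAt (fun ε : ℂ => Complex.Gamma (1 - ε)) 0 := by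
  have hg : ContinuousAt Complex.Gamma ((1:ℂ) - 0) := by
    norm_num; exact gamma_ca 1 ne_neg_nat_one
  exact hg.comp (x := (0:ℂ)) (f := fun ε : ℂ => 1 - ε) (by fun_prop)

lemma ca2 : ContinuousAt (fun ε : ℂ => Complex.Gamma (ε + 1)) 0 := by
  have hg : ContinuousAt Complex.Gamma ((0:ℂ) + 1) := by
    norm_num; exact gamma_ca 1 ne_neg_nat_one
  exact hg.comp (x := (0:ℂ)) (f := fun ε : ℂ => ε + 1) (by fun_prop)

lemma ca2' : ContinuousAt (fun ε : ℂ => Complex.Gamma (1 + ε)) 0 := by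
  have hg : ContinuousAt Complex.Gamma ((1:ℂ) + 0) := by
    norm_num; exact gamma_ca 1 ne_neg_nat_one
  exact hg.comp (x := (0:ℂ)) (f := fun ε : ℂ => 1 + ε) (by fun_prop)

lemma ca3 : ContinuousAt (fun ε : ℂ => (Complex.Gamma (2 - 2 * ε))⁻¹) 0 := by
  have hg : ContinuousAt Complex.Gamma ((2:ℂ) - 2 * 0) := by
    norm_num; exact gamma_ca 2 ne_neg_nat_two
  have h := hg.comp (x := (0:ℂ)) (f := fun ε : ℂ => 2 - 2 * ε) (by fun_prop)
  refine h.inv₀ ?_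
  show Complex.Gamma (2 - 2 * 0) ≠ 0
  norm_num [Gamma_two']

lemma ca4 : ContinuousAt (fun ε : ℂ => (Complex.Gamma (1 - 2 * ε))⁻¹) 0 := by
  have hg : ContinuousAt Complex.Gamma ((1:ℂ) - 2 * 0) := by
    norm_num; exact gamma_ca 1 ne_neg_nat_one
  have h := hg.comp (x := (0:ℂ)) (f := fun ε : ℂ => 1 - 2 * ε) (by fun_prop)
  refine h.inv₀ ?_
  show Complex.Gamma (1 - 2 * 0) ≠ 0
  norm_num [Complex.Gamma_one]

lemma tendsto_g1 : Tendsto (fun ε : ℂ =>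
    Complex.Gamma (1 - ε) * Complex.Gamma (1 - ε) * Complex.Gamma (ε + 1) *
      (Complex.Gamma (2 - 2 * ε))⁻¹) (𝓝 0) (𝓝 1) := by
  have h := ((ca1.mul ca1).mul ca2).mul ca3
  have := h.tendsto
  norm_num [Complex.Gamma_one, Gamma_two'] at this
  exact this

lemma tendsto_g2 : Tendsto (fun ε : ℂ =>
    Complex.Gamma (1 - ε) * Complex.Gamma (1 - ε) * Complex.Gamma (1 + ε) *
      (Complex.Gamma (1 - 2 * ε))⁻¹) (𝓝 0) (𝓝 1) := by
  have h := ((ca1.mul ca1).mul ca2').mul ca4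
  have := h.tendsto
  norm_num [Complex.Gamma_one] at this
  exact this

lemma eq_on_ne1 {ε : ℂ} (hε : ε ≠ 0) :
    ε * F ε 1 1 = Complex.Gamma (1 - ε) * Complex.Gamma (1 - ε) * Complex.Gamma (ε + 1) *
      (Complex.Gamma (2 - 2 * ε))⁻¹ := by
  have h : Complex.Gamma (ε + 1) = ε * Complex.Gamma ε := Complex.Gamma_add_one ε hε
  simp only [F, Complex.Gamma_one]
  have e1 : (2 : ℂ) - 1 - ε = 1 - ε := by ring
  have e2 : (1 : ℂ) + 1 - 2 + ε = ε := by ring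
  have e3 : (4 : ℂ) - 1 - 1 - 2 * ε = 2 - 2 * ε := by ring
  rw [e1, e2, e3, h]
  ring

lemma eq_on_ne2 {ε : ℂ} (hε : ε ≠ 0) :
    ε * F ε 2 1 = -(Complex.Gamma (1 - ε) * Complex.Gamma (1 - ε) * Complex.Gamma (1 + ε) *
      (Complex.Gamma (1 - 2 * ε))⁻¹) := by
  have h : Complex.Gamma (-ε + 1) = -ε * Complex.Gamma (-ε) :=
    Complex.Gamma_add_one (-ε) (neg_ne_zero.mpr hε)
  have h' : ε * Complex.Gamma (-ε) = -Complex.Gamma (1 - ε) := by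
    have : (1 : ℂ) - ε = -ε + 1 := by ring
    rw [this, h]; ring
  simp only [F, Complex.Gamma_one]
  have e1 : (2 : ℂ) - 2 - ε = -ε := by ring
  have e2 : (2 : ℂ) - 1 - ε = 1 - ε := by ring
  have e3 : (2 : ℂ) + 1 - 2 + ε = 1 + ε := by ring
  have e4 : (4 : ℂ) - 2 - 1 - 2 * ε = 1 - 2 * ε := by ring
  rw [e1, e2, e3, e4, Gamma_two']
  have expand : ε * (Complex.Gamma (-ε) * Complex.Gamma (1 - ε) * Complex.Gamma (1 + ε) * (1:ℂ)⁻¹ *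
      (1:ℂ)⁻¹ * (Complex.Gamma (1 - 2 * ε))⁻¹) = (ε * Complex.Gamma (-ε)) *
      (Complex.Gamma (1 - ε) * Complex.Gamma (1 + ε) * (Complex.Gamma (1 - 2 * ε))⁻¹) := by ring
  rw [expand, h']
  ring

lemma F20 (ε : ℂ) : F ε 2 0 = 0 := by
  simp [F, Complex.Gamma_zero]

/-- The two one-loop Yukawa vertex functions `Γ¹_{0,0} = F(1,1)` and
`Γ²_{0,0} = (1/2)[F(2,0) − F(2,1) + F(1,1)]` both have residue `1` at `ε = 0`. -/
theorem residues_equal_one :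
    Tendsto (fun ε : ℂ => ε * F ε 1 1) (𝓝[≠] (0 : ℂ)) (𝓝 1) ∧
      Tendsto (fun ε : ℂ => ε * ((1 / 2 : ℂ) * (F ε 2 0 - F ε 2 1 + F ε 1 1)))
        (𝓝[≠] (0 : ℂ)) (𝓝 1) := by
  constructor
  · refine Tendsto.congr' ?_ (tendsto_g1.mono_left nhdsWithin_le_nhds)
    filter_upwards [self_mem_nhdsWithin] with ε hε
    exact (eq_on_ne1 hε).symm
  · have hlim := (tendsto_g2.add tendsto_g1).const_mul (1 / 2 : ℂ)
    have e : (1 / 2 : ℂ) * (1 + 1) = 1 := by norm_num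
    rw [e] at hlim
    refine Tendsto.congr' ?_ (hlim.mono_left nhdsWithin_le_nhds)
    filter_upwards [self_mem_nhdsWithin] with ε hε
    have h1 := eq_on_ne1 (ε := ε) hε
    have h2 := eq_on_ne2 (ε := ε) hε
    rw [show ε * ((1 / 2 : ℂ) * (F ε 2 0 - F ε 2 1 + F ε 1 1)) =
      (1 / 2 : ℂ) * (F ε 2 0 * ε + (-(ε * F ε 2 1) + ε * F ε 1 1)) by ring, F20, h1, h2]
    ring
end
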